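/- arXiv:1503.03820 — 3 statements merged into one kernel-verified Lean document; each statement's English description precedes it below -/
import Mathlib

section
/- If T' ≺ T are topologies on a finite set X, then the connected components of the quotient topology T/T' coincide with the connected components of T. -/
variable {X : Type*}

/-- The specialization quasi-order of a topology: `x ≤_T y` iff every
`T`-open set containing `x` contains `y`. -/
def leT (t : TopologicalSpace X) (x y : X) : Prop :=
  ∀ U : Set X, t.IsOpen U → x ∈ U → y ∈ U

/-- The specialization equivalence `∼_T`. -/
def simT (t : TopologicalSpace X) (x y : X) : Prop :=
  leT t x y ∧ leT t y x

/-- The topology of final segments of a relation `r`. -/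
def topOfRel (r : X → X → Prop) : TopologicalSpace X where
  IsOpen U := ∀ x ∈ U, ∀ y, r x y → y ∈ U
  isOpen_univ := fun _ _ y _ => Set.mem_univ y
  isOpen_inter := fun U V hU hV x hx y hr => ⟨hU x hx.1 y hr, hV x hx.2 y hr⟩
  isOpen_sUnion := fun S hS x hx y hr => by
    obtain ⟨U, hU, hxU⟩ := hx
    exact ⟨U, hU, hS U hU x hxU y hr⟩

/-- `T'` is finer than `T`: every `T`-open set is `T'`-open. -/
def finer (t' t : TopologicalSpace X) : Prop :=
  ∀ U : Set X, t.IsOpen U → t'.IsOpen U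

/-- The quasi-order of the quotient topology `T/T'`: the transitive closure of
`x R y ↔ (x ≤_T y or y ≤_{T'} x)`. -/
def quotRel (t t' : TopologicalSpace X) : X → X → Prop :=
  Relation.ReflTransGen (fun x y => leT t x y ∨ leT t' y x)

/-- The quotient topology `T/T'`. -/
def quotTop (t t' : TopologicalSpace X) : TopologicalSpace X :=
  topOfRel (quotRel t t')

/-- Restriction (subspace topology) of `t` to a subset `Y`. -/
def restrictT (t : TopologicalSpace X) (Y : Set X) : TopologicalSpace Y :=
  t.induced Subtype.val

/-- `T'` is `T`-admissible (`T' ⊚≺ T`). -/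
def adm (t' t : TopologicalSpace X) : Prop :=
  finer t' t ∧
  (∀ Y : Set X, @IsConnected X t' Y → restrictT t' Y = restrictT t Y) ∧
  (∀ x y : X,
    (quotRel t t' x y ∧ quotRel t t' y x) ↔ (quotRel t' t' x y ∧ quotRel t' t' y x))

/-- The symmetric specialization relation. -/
def symRel (t : TopologicalSpace X) (a b : X) : Prop := leT t a b ∨ leT t b a

lemma symRel_symm (t : TopologicalSpace X) : Symmetric (symRel t) :=
  fun _ _ h => h.symm

/-- In a finite space, the connected component of `x` is the zigzag class of `x`. -/
lemma connectedComponent_eq_zigzag [Finite X] (t : TopologicalSpace X) (x : X) :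
    @connectedComponent X t x = {y | Relation.ReflTransGen (symRel t) x y} := by
  letI := t
  -- minimal open neighborhoods
  have hmin : ∀ y : X, ∃ V : Set X, IsOpen V ∧ y ∈ V ∧ ∀ z ∈ V, leT t y z := by
    intro y
    refine ⟨⋂ U : {U : Set X // IsOpen U ∧ y ∈ U}, U.1, isOpen_iInter_of_finite
        (fun U => U.2.1), Set.mem_iInter.2 (fun U => U.2.2), ?_⟩
    intro z hz U hU hyU
    exact Set.mem_iInter.1 hz ⟨U, hU, hyU⟩
  apply Set.Subset.antisymm
  · -- component ⊆ zigzag class, since the zigzag class is clopen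
    have hopen : IsOpen {y | Relation.ReflTransGen (symRel t) x y} := by
      rw [isOpen_iff_mem_nhds]
      intro y hy
      obtain ⟨V, hV, hyV, hle⟩ := hmin y
      exact mem_nhds_iff.2 ⟨V, fun z hz => hy.tail (Or.inl (hle z hz)), hV, hyV⟩
    have hclosed : IsClosed {y | Relation.ReflTransGen (symRel t) x y} := by
      rw [← closure_subset_iff_isClosed]
      intro z hz
      obtain ⟨V, hV, hzV, hle⟩ := hmin z
      obtain ⟨w, hwV, hw⟩ := mem_closure_iff.1 hz V hV hzV
      exact hw.tail (Or.inr (hle w hwV))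
    exact IsClopen.connectedComponent_subset ⟨hclosed, hopen⟩ Relation.ReflTransGen.refl
  · intro y hy
    induction hy with
    | refl => exact mem_connectedComponent
    | @tail b c _ hbc ih =>
        have hcb : c ∈ connectedComponent b := by
          rcases hbc with h1 | h1
          · -- leT t b c : b ∈ closure {c}
            have hb : b ∈ closure {c} :=
              mem_closure_iff.2 fun o ho hbo => ⟨c, h1 o ho hbo, rfl⟩
            exact (isPreconnected_singleton.closure).subset_connectedComponent hb
              (subset_closure rfl)
          · have hc : c ∈ closure {b} :=
              mem_closure_iff.2 fun o ho hco => ⟨b, h1 o ho hco, rfl⟩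
            exact (isPreconnected_singleton.closure).subset_connectedComponent
              (subset_closure rfl) hc
        rw [connectedComponent_eq ih]
        exact hcb

lemma leT_quotTop (t t' : TopologicalSpace X) (a b : X) :
    leT (quotTop t t') a b ↔ quotRel t t' a b := by
  constructor
  · intro hab
    exact hab {z | quotRel t t' a z}
      (fun p hp q hpq => Relation.ReflTransGen.trans hp hpq)
      Relation.ReflTransGen.refl
  · intro hab U hU haU
    exact hU a haU b hab

/-- If T' ≺ T, the connected components of T/T' coincide with those of T. -/
theorem quot_connectedComponents [Finite X] (t t' : TopologicalSpace X)
    (h : finer t' t) (x : X) :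
    @connectedComponent X (quotTop t t') x = @connectedComponent X t x := by
  rw [connectedComponent_eq_zigzag, connectedComponent_eq_zigzag]
  have hquot_to_zig : ∀ a b : X, quotRel t t' a b →
      Relation.ReflTransGen (symRel t) a b := by
    intro a b hab
    refine Relation.ReflTransGen.mono ?_ _ _ hab
    intro p q hpq
    rcases hpq with h1 | h1
    · exact Or.inl h1
    · exact Or.inr (fun U hU hqU => h1 U (h U hU) hqU)
  ext y
  constructor
  · intro hy
    induction hy with
    | refl => exact Relation.ReflTransGen.refl
    | @tail b c _ hbc ih =>
        rcases hbc with h1 | h1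
        · exact ih.trans (hquot_to_zig _ _ ((leT_quotTop t t' b c).1 h1))
        · exact ih.trans (@Std.Symm.symm _ _ (@Relation.ReflTransGen.stdSymm _ _ ⟨fun _ _ h => symRel_symm t h⟩) _ _
            (hquot_to_zig _ _ ((leT_quotTop t t' c b).1 h1)))
  · intro hy
    refine Relation.ReflTransGen.mono ?_ _ _ hy
    intro p q hpq
    rcases hpq with h1 | h1
    · exact Or.inl ((leT_quotTop t t' p q).2 (Relation.ReflTransGen.single (Or.inl h1)))
    · exact Or.inr ((leT_quotTop t t' q p).2 (Relation.ReflTransGen.single (Or.inl h1)))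
end

section
/- The admissibility relation ⊚≺ on topologies on a finite set X is transitive: if T'' ⊚≺ T' and T' ⊚≺ T, then T'' ⊚≺ T. -/
variable {X : Type*}

lemma leT_mono {t' t : TopologicalSpace X} (h : finer t' t) {x y : X}
    (hxy : leT t' x y) : leT t x y :=
  fun U hU hx => hxy U (h U hU) hx

lemma quotRel_mono {s s' t t' : TopologicalSpace X}
    (h1 : ∀ a b : X, leT s a b → leT t a b)
    (h2 : ∀ a b : X, leT s' a b → leT t' a b)
    {x y : X} (h : quotRel s s' x y) : quotRel t t' x y :=
  Relation.ReflTransGen.mono (fun a b (hab : leT s a b ∨ leT s' b a) => hab.imp (h1 a b) (h2 b a)) x y h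

lemma pair_conn (t : TopologicalSpace X) {a b : X} (h : leT t a b) :
    @IsConnected X t {a, b} := by
  letI := t
  have h1 : ({b} : Set X) ⊆ {a, b} := by simp
  have h2 : ({a, b} : Set X) ⊆ closure {b} := by
    intro x hx
    rcases hx with rfl | rfl
    · rw [mem_closure_iff]
      intro U hU hxU
      exact ⟨b, h U hU hxU, rfl⟩
    · exact subset_closure rfl
  exact isConnected_singleton.subset_closure h1 h2

lemma chain_conn (t' : TopologicalSpace X) {z y : X}
    (h : Relation.ReflTransGen (fun a b => leT t' a b ∨ leT t' b a) z y) :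
    ∃ Y : Set X, @IsConnected X t' Y ∧ z ∈ Y ∧ y ∈ Y := by
  letI := t'
  induction h with
  | refl => exact ⟨{z}, isConnected_singleton, rfl, rfl⟩
  | @tail b c hzb step ih =>
    obtain ⟨Y, hY, hzY, hbY⟩ := ih
    have hp : @IsConnected X t' {b, c} := by
      rcases step with hbc | hcb
      · exact pair_conn t' hbc
      · rw [Set.pair_comm]; exact pair_conn t' hcb
    refine ⟨Y ∪ {b, c}, hY.union ⟨b, hbY, by simp⟩ hp, Or.inl hzY, Or.inr (by simp)⟩

lemma leT_of_eq_restrict {t t' : TopologicalSpace X} {Y : Set X}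
    (heq : restrictT t' Y = restrictT t Y) {z w : X}
    (hz : z ∈ Y) (hw : w ∈ Y) (h : leT t z w) : leT t' z w := by
  intro U hU hzU
  have hUY : (restrictT t' Y).IsOpen (Subtype.val ⁻¹' U) := ⟨U, hU, rfl⟩
  rw [heq] at hUY
  obtain ⟨V, hV, hVU⟩ := hUY
  have hzV : z ∈ V := by
    have : (⟨z, hz⟩ : Y) ∈ Subtype.val ⁻¹' V := by rw [hVU]; exact hzU
    exact this
  have hwV : w ∈ V := h V hV hzV
  have : (⟨w, hw⟩ : Y) ∈ Subtype.val ⁻¹' U := by rw [← hVU]; exact hwV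
  exact this

lemma isConnected_congr {t₁ t₂ : TopologicalSpace X} {Y : Set X}
    (heq : restrictT t₁ Y = restrictT t₂ Y) (h : @IsConnected X t₁ Y) :
    @IsConnected X t₂ Y := by
  rw [@isConnected_iff_connectedSpace X t₁ Y] at h
  rw [@isConnected_iff_connectedSpace X t₂ Y]
  have h' : @ConnectedSpace Y (restrictT t₁ Y) := h
  rw [heq] at h'
  exact h'

lemma key {t t' t'' : TopologicalSpace X} (f1 : finer t'' t')
    (c2 : ∀ Y : Set X, @IsConnected X t' Y → restrictT t' Y = restrictT t Y)
    (q2 : ∀ x y : X,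
      (quotRel t t' x y ∧ quotRel t t' y x) ↔ (quotRel t' t' x y ∧ quotRel t' t' y x))
    {x y : X} (hxy : quotRel t t'' x y) (hyx : quotRel t t'' y x) :
    quotRel t' t'' x y := by
  induction hxy with
  | refl => exact Relation.ReflTransGen.refl
  | @tail b c hxb step ih =>
    have hbx : quotRel t t'' b x :=
      Relation.ReflTransGen.trans (Relation.ReflTransGen.single step) hyx
    have hxb' : quotRel t' t'' x b := ih hbx
    rcases step with hbc | hcb
    · have hbc' : quotRel t t'' b c := Relation.ReflTransGen.single (Or.inl hbc)
      have hcb' : quotRel t t'' c b := Relation.ReflTransGen.trans hyx hxb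
      have m : ∀ a b : X, quotRel t t'' a b → quotRel t t' a b :=
        fun a b h => quotRel_mono (fun _ _ h => h) (fun a b => leT_mono f1) h
      have hsym := (q2 b c).mp ⟨m _ _ hbc', m _ _ hcb'⟩
      obtain ⟨Y, hYc, hbY, hcY⟩ := chain_conn t' hsym.1
      exact hxb'.tail (Or.inl (leT_of_eq_restrict (c2 Y hYc) hbY hcY hbc))
    · exact hxb'.tail (Or.inr hcb)

/-- The admissibility relation  is transitive. -/
theorem adm_trans [Finite X] (t t' t'' : TopologicalSpace X)
    (h1 : adm t'' t') (h2 : adm t' t) :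
    adm t'' t := by
  obtain ⟨f1, c1, q1⟩ := h1
  obtain ⟨f2, c2, q2⟩ := h2
  refine ⟨fun U hU => f1 U (f2 U hU), ?_, ?_⟩
  · intro Y hY
    have hY' : @IsConnected X t' Y := isConnected_congr (c1 Y hY) hY
    rw [c1 Y hY, c2 Y hY']
  · intro x y
    constructor
    · rintro ⟨hxy, hyx⟩
      exact (q1 x y).mp ⟨key f1 c2 q2 hxy hyx, key f1 c2 q2 hyx hxy⟩
    · rintro ⟨hxy, hyx⟩
      have m : ∀ a b : X, quotRel t'' t'' a b → quotRel t t'' a b :=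
        fun a b h =>
          quotRel_mono (fun a b h => leT_mono (fun U hU => f1 U (f2 U hU)) h)
            (fun _ _ h => h) h
      exact ⟨m _ _ hxy, m _ _ hyx⟩
end

section
/- For any topology T on a finite set X, there exists a unique topology T' with T' ⊚≺ T and ≤_{T'} an equivalence relation, namely the topology with ≤_{T'} = ∼_T; moreover for this T', T/T' = T. Dually, T itself is the unique topology T'' with T'' ⊚≺ T such that ≤_{T/T''} is an equivalence relation. -/
variable {X : Type*}

section Aux

open Relation

lemma leT_refl' (t : TopologicalSpace X) (x : X) : leT t x x :=
  fun _ _ hx => hx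

lemma leT_trans' {t : TopologicalSpace X} {x y z : X} (h1 : leT t x y) (h2 : leT t y z) :
    leT t x z := fun U hU hx => h2 U hU (h1 U hU hx)

lemma leT_topOfRel {r : X → X → Prop} {x y : X} :
    leT (topOfRel r) x y ↔ ReflTransGen r x y := by
  constructor
  · intro h
    have hopen : (topOfRel r).IsOpen {z | ReflTransGen r x z} := by
      intro a ha b hab
      exact ha.tail hab
    exact h _ hopen ReflTransGen.refl
  · intro h U hU hx
    induction h with
    | refl => exact hx
    | tail _ hbc ih => exact hU _ ih _ hbc

lemma isOpen_iff_upclosed [Finite X] (t : TopologicalSpace X) (U : Set X) :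
    t.IsOpen U ↔ ∀ x ∈ U, ∀ y, leT t x y → y ∈ U := by
  constructor
  · intro hU x hx y hxy
    exact hxy U hU hx
  · intro h
    have hcore : ∀ x : X, t.IsOpen {y | leT t x y} := by
      intro x
      have : {y | leT t x y} = ⋂₀ {V : Set X | t.IsOpen V ∧ x ∈ V} := by
        ext y
        simp only [Set.mem_setOf_eq, Set.mem_sInter]
        exact ⟨fun h V ⟨hV, hxV⟩ => h V hV hxV, fun h V hV hxV => h V ⟨hV, hxV⟩⟩
      rw [this]
      exact @Set.Finite.isOpen_sInter X t _ (Set.toFinite _) (fun V hV => hV.1)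
    have : U = ⋃ x ∈ U, {y | leT t x y} := by
      ext y
      simp only [Set.mem_iUnion, Set.mem_setOf_eq]
      constructor
      · intro hy; exact ⟨y, hy, leT_refl' t y⟩
      · rintro ⟨x, hx, hxy⟩; exact h x hx y hxy
    rw [this]
    exact @isOpen_biUnion X X t U _ (fun x _ => hcore x)

lemma eq_of_leT_eq [Finite X] {t t' : TopologicalSpace X}
    (h : ∀ x y, leT t x y ↔ leT t' x y) : t = t' := by
  apply TopologicalSpace.ext
  ext U
  show t.IsOpen U ↔ t'.IsOpen U
  rw [isOpen_iff_upclosed t U, isOpen_iff_upclosed t' U]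
  constructor
  · intro hU x hx y hxy; exact hU x hx y ((h x y).mpr hxy)
  · intro hU x hx y hxy; exact hU x hx y ((h x y).mp hxy)

lemma finer_leT {t t' : TopologicalSpace X} (h : finer t' t) {x y : X}
    (hxy : leT t' x y) : leT t x y := fun U hU hx => hxy U (h U hU) hx

lemma quotRel_self_symm (t : TopologicalSpace X) : Symmetric (quotRel t t) :=
  fun a b h => by
    have : Std.Symm (fun x y : X => leT t x y ∨ leT t y x) := ⟨fun _ _ h => h.symm⟩
    exact (ReflTransGen.symmetric (r := fun x y : X => leT t x y ∨ leT t y x)).symm a b h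

lemma rtc_le_of_trans {r : X → X → Prop} {q : X → X → Prop}
    (hrefl : ∀ x, q x x) (htrans : ∀ {a b c}, q a b → q b c → q a c)
    (hsub : ∀ {a b}, r a b → q a b) {x y : X} (h : ReflTransGen r x y) : q x y := by
  induction h with
  | refl => exact hrefl x
  | tail _ hbc ih => exact htrans ih (hsub hbc)

/-- For an equivalence quasi-order, `quotRel t' t'` collapses to `leT t'`. -/
lemma quotRel_self_of_equiv {t' : TopologicalSpace X} (hE : Equivalence (leT t'))
    {x y : X} : quotRel t' t' x y ↔ leT t' x y := by
  constructor
  · exact rtc_le_of_trans (fun z => leT_refl' t' z) (fun h1 h2 => leT_trans' h1 h2)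
      (fun h => h.elim id hE.symm)
  · intro h; exact ReflTransGen.single (Or.inl h)

lemma simT_equiv (t : TopologicalSpace X) : Equivalence (simT t) where
  refl x := ⟨leT_refl' t x, leT_refl' t x⟩
  symm h := ⟨h.2, h.1⟩
  trans h1 h2 := ⟨leT_trans' h1.1 h2.1, leT_trans' h2.2 h1.2⟩

/-- `leT` of `topOfRel (simT t)` is `simT t` itself. -/
lemma leT_topSim (t : TopologicalSpace X) {x y : X} :
    leT (topOfRel (simT t)) x y ↔ simT t x y := by
  rw [leT_topOfRel]
  constructor
  · exact rtc_le_of_trans (fun z => (simT_equiv t).refl z)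
      (fun h1 h2 => (simT_equiv t).trans h1 h2) id
  · exact ReflTransGen.single

/-- `quotRel t (topOfRel (simT t))` collapses to `leT t`. -/
lemma quotRel_sim (t : TopologicalSpace X) {x y : X} :
    quotRel t (topOfRel (simT t)) x y ↔ leT t x y := by
  constructor
  · refine rtc_le_of_trans (fun z => leT_refl' t z) (fun h1 h2 => leT_trans' h1 h2) ?_
    rintro a b (h | h)
    · exact h
    · exact ((leT_topSim t).mp h).2
  · intro h; exact ReflTransGen.single (Or.inl h)

/-- admissibility of the candidate `topOfRel (simT t)`. -/
lemma adm_topSim [Finite X] (t : TopologicalSpace X) : adm (topOfRel (simT t)) t := by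
  set t0 := topOfRel (simT t) with ht0
  refine ⟨?_, ?_, ?_⟩
  · intro U hU x hx y hxy
    exact hxy.1 U hU hx
  · -- connected pieces
    intro Y hY
    -- claim: all points of Y are simT-equivalent
    have hclass : ∀ a ∈ Y, ∀ b ∈ Y, simT t a b := by
      by_contra hcon
      push_neg at hcon
      obtain ⟨a, ha, b, hb, hab⟩ := hcon
      have hU : t0.IsOpen {z | simT t a z} := by
        intro z hz w hzw
        exact (simT_equiv t).trans hz hzw
      have hV : t0.IsOpen {z | ¬ simT t a z} := by
        intro z hz w hzw hw
        exact hz ((simT_equiv t).trans hw ((simT_equiv t).symm hzw))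
      have hsub : Y ⊆ {z | simT t a z} ∪ {z | ¬ simT t a z} := by
        intro z _; by_cases h : simT t a z
        · exact Or.inl h
        · exact Or.inr h
      have hne := hY.2 _ _ hU hV hsub ⟨a, ha, (simT_equiv t).refl a⟩ ⟨b, hb, hab⟩
      obtain ⟨c, _, hc1, hc2⟩ := hne
      exact hc2 hc1
    -- both subspace topologies are indiscrete
    apply TopologicalSpace.ext
    ext S
    show (restrictT t0 Y).IsOpen S ↔ (restrictT t Y).IsOpen S
    have key : ∀ (τ : TopologicalSpace X),
        (∀ (U : Set X), τ.IsOpen U → ∀ a ∈ U, ∀ b, a ∈ Y → b ∈ Y → b ∈ U) →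
        ((restrictT τ Y).IsOpen S ↔ (S = ∅ ∨ S = Set.univ)) := by
      intro τ hτ
      constructor
      · intro hS
        obtain ⟨U, hU, hUS⟩ := (@isOpen_induced_iff _ _ τ S Subtype.val).mp hS
        rcases Set.eq_empty_or_nonempty S with h | ⟨⟨a, ha⟩, haS⟩
        · exact Or.inl h
        · refine Or.inr (Set.eq_univ_of_forall ?_)
          rintro ⟨b, hb⟩
          have : a ∈ U := by rw [← hUS] at haS; exact haS
          have : b ∈ U := hτ U hU a this b ha hb
          rw [← hUS]; exact this
      · rintro (rfl | rfl)
        · exact @isOpen_empty _ (restrictT τ Y)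
        · exact @isOpen_univ _ (restrictT τ Y)
    rw [key t0 (fun U hU a haU b ha hb => hU a haU b (hclass a ha b hb)),
      key t (fun U hU a haU b ha hb => (hclass a ha b hb).1 U hU haU)]
  · intro x y
    have h1 : quotRel t t0 x y ↔ leT t x y := quotRel_sim t
    have h2 : quotRel t t0 y x ↔ leT t y x := quotRel_sim t
    have hE : Equivalence (leT t0) := by
      constructor
      · intro z; exact leT_refl' t0 z
      · intro a b h; exact (leT_topSim t).mpr ((simT_equiv t).symm ((leT_topSim t).mp h))
      · intro a b c h1 h2; exact leT_trans' h1 h2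
    rw [h1, h2, quotRel_self_of_equiv hE, quotRel_self_of_equiv hE, leT_topSim, leT_topSim]
    constructor
    · rintro ⟨h, h'⟩; exact ⟨⟨h, h'⟩, (simT_equiv t).symm ⟨h, h'⟩⟩
    · rintro ⟨h, _⟩; exact ⟨h.1, h.2⟩

/-- Any admissible `t'` with equivalence quasi-order has `leT t' = simT t`. -/
lemma leT_eq_simT_of_adm [Finite X] {t t' : TopologicalSpace X}
    (hA : adm t' t) (hE : Equivalence (leT t')) :
    ∀ x y, leT t' x y ↔ simT t x y := by
  intro x y
  constructor
  · intro h
    exact ⟨finer_leT hA.1 h, finer_leT hA.1 (hE.symm h)⟩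
  · intro h
    have h1 : quotRel t t' x y := ReflTransGen.single (Or.inl h.1)
    have h2 : quotRel t t' y x := ReflTransGen.single (Or.inl h.2)
    have := (hA.2.2 x y).mp ⟨h1, h2⟩
    exact (quotRel_self_of_equiv hE).mp this.1

section Part3

variable [Finite X]

lemma quotTop_leT {t t' : TopologicalSpace X} {x y : X} :
    leT (quotTop t t') x y ↔ quotRel t t' x y := by
  rw [quotTop, leT_topOfRel, quotRel, Relation.reflTransGen_idem]

/-- the class of `x` under `quotRel t'' t''` is `t''`-connected -/
lemma class_connected (t'' : TopologicalSpace X) (x : X) :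
    @IsConnected X t'' {z | quotRel t'' t'' x z} := by
  set Y := {z | quotRel t'' t'' x z} with hY
  constructor
  · exact ⟨x, ReflTransGen.refl⟩
  · intro U V hU hV hsub hUne hVne
    by_contra hcon
    rw [Set.not_nonempty_iff_eq_empty] at hcon
    obtain ⟨a, haY, haU⟩ := hUne
    obtain ⟨b, hbY, hbV⟩ := hVne
    have hab : quotRel t'' t'' a b :=
      ((quotRel_self_symm t'') haY).trans hbY
    -- by induction along the chain, b ∈ U
    have key : ∀ c, quotRel t'' t'' a c → c ∈ U := by
      intro c hac
      induction hac with
      | refl => exact haU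
      | @tail p q hap hpq ih =>
        have hpY : p ∈ Y := haY.trans hap
        have hqY : q ∈ Y := hpY.tail hpq
        have hpU : p ∈ U := ih
        rcases hpq with h | h
        · exact h U hU hpU
        · rcases hsub hqY with hq | hq
          · exact hq
          · exfalso
            have : p ∈ V := h V hV hq
            have : p ∈ Y ∩ (U ∩ V) := ⟨hpY, hpU, this⟩
            rw [hcon] at this; exact this
    have hbU : b ∈ U := key b hab
    have : b ∈ Y ∩ (U ∩ V) := ⟨hbY, hbU, hbV⟩
    rw [hcon] at this; exact this

lemma leT_of_quot_equiv {t t'' : TopologicalSpace X} (hA : adm t'' t)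
    (hE : Equivalence (leT (quotTop t t''))) {x y : X} (h : leT t x y) :
    leT t'' x y := by
  have hQ : quotRel t t'' x y := ReflTransGen.single (Or.inl h)
  have hQ' : quotRel t t'' y x := by
    have := hE.symm (quotTop_leT.mpr hQ)
    exact quotTop_leT.mp this
  have hEE := (hA.2.2 x y).mp ⟨hQ, hQ'⟩
  set Y := {z | quotRel t'' t'' x z} with hYdef
  have hxY : x ∈ Y := ReflTransGen.refl
  have hyY : y ∈ Y := hEE.1
  have hConn := class_connected t'' x
  have hrestr := hA.2.1 Y hConn
  -- now conclude
  intro U hU hx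
  have hUo : (restrictT t'' Y).IsOpen (Subtype.val ⁻¹' U) :=
    (@isOpen_induced_iff _ _ t'' _ Subtype.val).mpr ⟨U, hU, rfl⟩
  rw [hrestr] at hUo
  obtain ⟨V, hV, hVU⟩ := (@isOpen_induced_iff _ _ t _ Subtype.val).mp hUo
  have hxV : (⟨x, hxY⟩ : Y) ∈ Subtype.val ⁻¹' V := by
    rw [hVU]; exact hx
  have hyV : y ∈ V := h V hV hxV
  have : (⟨y, hyY⟩ : Y) ∈ Subtype.val ⁻¹' V := hyV
  rw [hVU] at this
  exact this

end Part3

end Aux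

/-- There is a unique admissible `T' ⊚≺ T` whose quasi-order is an equivalence,
namely the one with quasi-order `∼_T`, and for it `T/T' = T`; dually, `T` is the
unique `T'' ⊚≺ T` whose quotient `T/T''` has equivalence quasi-order. -/
theorem unique_grouplike_admissible [Finite X] (t : TopologicalSpace X) :
    (∃! t' : TopologicalSpace X, adm t' t ∧ Equivalence (leT t')) ∧
    (∀ t' : TopologicalSpace X, adm t' t → Equivalence (leT t') →
      (∀ x y : X, leT t' x y ↔ simT t x y) ∧ quotTop t t' = t) ∧
    (∀ t'' : TopologicalSpace X, adm t'' t →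
      (Equivalence (leT (quotTop t t'')) ↔ t'' = t)) := by
  set t0 := topOfRel (simT t) with ht0
  have hadm0 : adm t0 t := adm_topSim t
  have hE0 : Equivalence (leT t0) := by
    constructor
    · intro z; exact leT_refl' t0 z
    · intro a b h; exact (leT_topSim t).mpr ((simT_equiv t).symm ((leT_topSim t).mp h))
    · intro a b c h1 h2; exact leT_trans' h1 h2
  refine ⟨⟨t0, ⟨hadm0, hE0⟩, ?_⟩, ?_, ?_⟩
  · rintro t' ⟨hA, hE⟩
    apply eq_of_leT_eq
    intro x y
    exact (leT_eq_simT_of_adm hA hE x y).trans (leT_topSim t).symm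
  · intro t' hA hE
    refine ⟨leT_eq_simT_of_adm hA hE, ?_⟩
    apply eq_of_leT_eq
    intro x y
    rw [quotTop_leT]
    constructor
    · refine rtc_le_of_trans (fun z => leT_refl' t z) (fun h1 h2 => leT_trans' h1 h2) ?_
      rintro a b (h | h)
      · exact h
      · exact ((leT_eq_simT_of_adm hA hE _ _).mp h).2
    · intro h; exact Relation.ReflTransGen.single (Or.inl h)
  · intro t'' hA
    constructor
    · intro hE
      apply eq_of_leT_eq
      intro x y
      exact ⟨fun h => finer_leT hA.1 h, fun h => leT_of_quot_equiv hA hE h⟩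
    · rintro rfl
      constructor
      · intro z; exact quotTop_leT.mpr Relation.ReflTransGen.refl
      · intro a b h
        exact quotTop_leT.mpr ((quotRel_self_symm _) (quotTop_leT.mp h))
      · intro a b c h1 h2
        exact quotTop_leT.mpr ((quotTop_leT.mp h1).trans (quotTop_leT.mp h2))
end
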